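/- Let G be a finite directed graph, r a vertex of G, and k a positive integer. For every pair of r-directed trees T and T' in G with |A(T)| = |A(T')| = k, there exists a reconfiguration sequence ⟨T = T_0, T_1, …, T_ℓ = T'⟩ in which every T_i is an r-directed tree in G with k arcs, and whose length ℓ is at most k. -/

import Mathlib

/-- The vertex set of a set of arcs. -/
def arcVerts {V : Type*} [DecidableEq V] (T : Finset (V × V)) : Finset V :=
  T.image Prod.fst ∪ T.image Prod.snd

/-- The in-degree of a vertex `v` in a set of arcs `T`. -/
def inDeg {V : Type*} [DecidableEq V] (T : Finset (V × V)) (v : V) : ℕ :=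
  (T.filter fun e => e.2 = v).card

/-- The step relation of a set of arcs: `arcRel T a b` iff `(a, b)` is an arc of `T`. -/
def arcRel {V : Type*} (T : Finset (V × V)) : V → V → Prop := fun a b => (a, b) ∈ T

/-- `T` is (the arc set of) a directed tree rooted at `r`: the root has in-degree `0`,
every other vertex has in-degree exactly `1`, and every vertex is reachable from `r`. -/
def IsDirTree {V : Type*} [DecidableEq V] (T : Finset (V × V)) (r : V) : Prop :=
  inDeg T r = 0 ∧ (∀ v ∈ arcVerts T, v ≠ r → inDeg T v = 1) ∧
    ∀ v ∈ arcVerts T, Relation.ReflTransGen (arcRel T) r v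

namespace DirTreeAux

variable {V : Type*} [DecidableEq V]

lemma mem_arcVerts {T : Finset (V × V)} {y : V} :
    y ∈ arcVerts T ↔ ∃ a ∈ T, a.1 = y ∨ a.2 = y := by
  simp only [arcVerts, Finset.mem_union, Finset.mem_image]
  constructor
  · rintro (⟨a, ha, rfl⟩ | ⟨a, ha, rfl⟩)
    · exact ⟨a, ha, Or.inl rfl⟩
    · exact ⟨a, ha, Or.inr rfl⟩
  · rintro ⟨a, ha, rfl | rfl⟩
    · exact Or.inl ⟨a, ha, rfl⟩
    · exact Or.inr ⟨a, ha, rfl⟩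

lemma fst_mem_arcVerts {T : Finset (V × V)} {a : V × V} (h : a ∈ T) : a.1 ∈ arcVerts T :=
  mem_arcVerts.2 ⟨a, h, Or.inl rfl⟩

lemma snd_mem_arcVerts {T : Finset (V × V)} {a : V × V} (h : a ∈ T) : a.2 ∈ arcVerts T :=
  mem_arcVerts.2 ⟨a, h, Or.inr rfl⟩

lemma inDeg_pos {T : Finset (V × V)} {a : V × V} (h : a ∈ T) : 0 < inDeg T a.2 :=
  Finset.card_pos.2 ⟨a, Finset.mem_filter.2 ⟨h, rfl⟩⟩

lemma head_ne_root {T : Finset (V × V)} {r : V} (hT : IsDirTree T r) {a : V × V}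
    (ha : a ∈ T) : a.2 ≠ r := by
  intro h
  have := inDeg_pos ha
  rw [h, hT.1] at this
  exact lt_irrefl _ this

lemma uniq_in {T : Finset (V × V)} {y : V} (h1 : inDeg T y = 1) {a b : V × V}
    (ha : a ∈ T) (hb : b ∈ T) (ha2 : a.2 = y) (hb2 : b.2 = y) : a = b :=
  Finset.card_le_one.mp (le_of_eq h1) a (Finset.mem_filter.2 ⟨ha, ha2⟩)
    b (Finset.mem_filter.2 ⟨hb, hb2⟩)

lemma exists_in_arc {T : Finset (V × V)} {y : V} (h : 0 < inDeg T y) :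
    ∃ a ∈ T, a.2 = y := by
  obtain ⟨a, ha⟩ := Finset.card_pos.1 h
  exact ⟨a, (Finset.mem_filter.1 ha).1, (Finset.mem_filter.1 ha).2⟩

lemma inDeg_eq_zero {T : Finset (V × V)} {y : V} (h : y ∉ arcVerts T) : inDeg T y = 0 := by
  by_contra hne
  obtain ⟨a, ha, ha2⟩ := exists_in_arc (Nat.pos_of_ne_zero hne)
  exact h (ha2 ▸ snd_mem_arcVerts ha)

lemma inDeg_insert {T : Finset (V × V)} {e : V × V} (he : e ∉ T) (y : V) :
    inDeg (insert e T) y = inDeg T y + if e.2 = y then 1 else 0 := by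
  unfold inDeg
  rw [Finset.filter_insert]
  split_ifs with h
  · rw [Finset.card_insert_of_notMem (fun hc => he (Finset.mem_filter.1 hc).1)]
  · rfl

lemma inDeg_erase {T : Finset (V × V)} {e : V × V} (he : e ∈ T) (y : V) :
    inDeg (T.erase e) y = inDeg T y - if e.2 = y then 1 else 0 := by
  unfold inDeg
  rw [Finset.filter_erase]
  split_ifs with h
  · rw [Finset.card_erase_of_mem (Finset.mem_filter.2 ⟨he, h⟩)]
  · have hnm : e ∉ T.filter (fun a => a.2 = y) := fun hc => h (Finset.mem_filter.1 hc).2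
    rw [Finset.erase_eq_of_notMem hnm, Nat.sub_zero]

lemma arcRel_iff {T : Finset (V × V)} {a b : V} : arcRel T a b ↔ (a, b) ∈ T := Iff.rfl

def chainLen (R : V → V → Prop) : ℕ → V → V → Prop
  | 0, a, b => a = b
  | n + 1, a, b => ∃ c, chainLen R n a c ∧ R c b

lemma rtg_chain {R : V → V → Prop} {a b : V} (h : Relation.ReflTransGen R a b) :
    ∃ n, chainLen R n a b := by
  induction h with
  | refl => exact ⟨0, rfl⟩
  | tail _ hbc ih =>
    obtain ⟨n, hn⟩ := ih
    exact ⟨n + 1, _, hn, hbc⟩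

lemma crossing {R : V → V → Prop} {P : V → Prop} {a b : V}
    (h : Relation.ReflTransGen R a b) (ha : P a) (hb : ¬ P b) :
    ∃ u v, P u ∧ ¬ P v ∧ R u v := by
  revert hb
  induction h with
  | refl => intro hb; exact absurd ha hb
  | @tail c d hac hcd ih =>
    intro hb
    by_cases hc : P c
    · exact ⟨c, d, hc, hb, hcd⟩
    · exact ih hc

/-- Guarded transfer of reachability when removing the in-arc of a leaf `e.2`. -/
lemma rtg_transfer {T N : Finset (V × V)} {e : V × V} {r : V}
    (hTN : ∀ a ∈ T, a ≠ e → a ∈ N)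
    (hguard : ∀ a ∈ T, a.1 ≠ e.2)
    {y : V} (h : Relation.ReflTransGen (arcRel T) r y) (hy : y ≠ e.2) :
    Relation.ReflTransGen (arcRel N) r y := by
  revert hy
  induction h with
  | refl => intro _; exact Relation.ReflTransGen.refl
  | @tail c d hrc hcd ih =>
    intro hd
    have hcT : (c, d) ∈ T := hcd
    have hc : c ≠ e.2 := hguard (c, d) hcT
    have hne : (c, d) ≠ e := fun hh => hd (congrArg Prod.snd hh)
    exact (ih hc).tail (hTN (c, d) hcT hne)

/-- Transfer of reachability when the removed arc's head stays reachable. -/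
lemma rtg_transfer' {T N : Finset (V × V)} {e : V × V} {r : V}
    (hTN : ∀ a ∈ T, a ≠ e → a ∈ N)
    (hv : Relation.ReflTransGen (arcRel N) r e.2)
    {y : V} (h : Relation.ReflTransGen (arcRel T) r y) :
    Relation.ReflTransGen (arcRel N) r y := by
  induction h with
  | refl => exact Relation.ReflTransGen.refl
  | @tail c d hrc hcd ih =>
    by_cases hce : (c, d) = e
    · have : d = e.2 := by rw [← hce]
      rw [this]; exact hv
    · exact ih.tail (hTN (c, d) hcd hce)

lemma arcVerts_eq {T : Finset (V × V)} {r : V} (hT : IsDirTree T r) (hne : T.Nonempty) :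
    arcVerts T = insert r (T.image Prod.snd) := by
  ext y
  simp only [Finset.mem_insert, Finset.mem_image]
  constructor
  · intro h
    rcases mem_arcVerts.1 h with ⟨a, ha, h1 | h2⟩
    · have hr := hT.2.2 y h
      rcases hr.cases_tail with h' | ⟨c, _, hcy⟩
      · exact Or.inl h'
      · exact Or.inr ⟨(c, y), hcy, rfl⟩
    · exact Or.inr ⟨a, ha, h2⟩
  · rintro (rfl | ⟨a, ha, rfl⟩)
    · obtain ⟨a, ha⟩ := hne
      have hb : a.2 ∈ arcVerts T := snd_mem_arcVerts ha
      have hbr : a.2 ≠ y := head_ne_root hT ha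
      have hr := hT.2.2 a.2 hb
      rcases hr.cases_head with h' | ⟨c, hrc, _⟩
      · exact absurd h'.symm hbr
      · exact mem_arcVerts.2 ⟨(y, c), hrc, Or.inl rfl⟩
    · exact snd_mem_arcVerts ha

lemma card_arcVerts {T : Finset (V × V)} {r : V} (hT : IsDirTree T r) (hne : T.Nonempty) :
    (arcVerts T).card = T.card + 1 := by
  rw [arcVerts_eq hT hne]
  have hr : r ∉ T.image Prod.snd := by
    simp only [Finset.mem_image]
    rintro ⟨a, ha, ha2⟩
    exact head_ne_root hT ha ha2
  rw [Finset.card_insert_of_notMem hr]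
  have hinj : Set.InjOn Prod.snd (T : Set (V × V)) := by
    intro a ha b hb hab
    have haT : a ∈ T := Finset.mem_coe.1 ha
    have hbT : b ∈ T := Finset.mem_coe.1 hb
    have hy : a.2 ∈ arcVerts T := snd_mem_arcVerts haT
    have h1 : inDeg T a.2 = 1 := hT.2.1 a.2 hy (head_ne_root hT haT)
    exact uniq_in h1 haT hbT rfl hab.symm
  rw [Finset.card_image_of_injOn hinj, add_comm]

lemma exists_leaf {T : Finset (V × V)} {r : V} (hT : IsDirTree T r) (S : Finset V)
    (hcard : S.card < (arcVerts T).card) (hrS : r ∈ S)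
    (hclosed : ∀ a : V × V, a ∈ T → a.2 ∈ S → a.1 ∈ S) :
    ∃ z ∈ arcVerts T, z ∉ S ∧ ∀ a ∈ T, a.1 ≠ z := by
  classical
  have hQ : (arcVerts T \ S).Nonempty := by
    rw [← Finset.card_pos]
    have h1 : (arcVerts T ∩ S).card ≤ S.card := Finset.card_le_card Finset.inter_subset_right
    have h2 := Finset.card_sdiff_add_card_inter (arcVerts T) S
    omega
  have hreach : ∀ y ∈ arcVerts T, ∃ n, chainLen (arcRel T) n r y :=
    fun y hy => rtg_chain (hT.2.2 y hy)
  let d : V → ℕ := fun y =>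
    if h : ∃ n, chainLen (arcRel T) n r y then Nat.find h else 0
  obtain ⟨z, hzQ, hzmax⟩ := Finset.exists_max_image (arcVerts T \ S) d hQ
  obtain ⟨hz1, hz2⟩ := Finset.mem_sdiff.1 hzQ
  refine ⟨z, hz1, hz2, ?_⟩
  intro a ha hz
  -- a ∈ T with a.1 = z; derive a contradiction via depth
  have hy2 : a.2 ∈ arcVerts T := snd_mem_arcVerts ha
  have hyr : a.2 ≠ r := head_ne_root hT ha
  have h1 : inDeg T a.2 = 1 := hT.2.1 a.2 hy2 hyr
  have hyE : ∃ n, chainLen (arcRel T) n r a.2 := hreach _ hy2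
  have hzE : ∃ n, chainLen (arcRel T) n r z := hreach _ hz1
  have hdy : d a.2 = Nat.find hyE := dif_pos hyE
  have hdz : d z = Nat.find hzE := dif_pos hzE
  have hlt : d z < d a.2 := by
    rw [hdy, hdz]
    have hspec := Nat.find_spec hyE
    cases hfind : Nat.find hyE with
    | zero =>
      rw [hfind] at hspec
      exact absurd hspec.symm hyr
    | succ m =>
      rw [hfind] at hspec
      obtain ⟨c, hc, hcy⟩ := hspec
      have hceq : (c, a.2) = a := uniq_in h1 hcy ha rfl rfl
      have hc1 : c = a.1 := by rw [← hceq]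
      rw [hc1, hz] at hc
      have hle : Nat.find hzE ≤ m := Nat.find_le hc
      omega
  -- a.2 must be in S (else it contradicts maximality), then closure puts z in S
  by_cases hyS : a.2 ∈ S
  · exact hz2 (hz ▸ hclosed a ha hyS)
  · have hyQ : a.2 ∈ arcVerts T \ S := Finset.mem_sdiff.2 ⟨hy2, hyS⟩
    have := hzmax a.2 hyQ
    omega

/-- Swap when the new head `v` is already a vertex: remove its old in-arc `e`. -/
lemma swapA {Tc : Finset (V × V)} {r u v : V} {e : V × V}
    (hTc : IsDirTree Tc r) (he : e ∈ Tc) (he2 : e.2 = v)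
    (huvTc : (u, v) ∉ Tc) (hvr : v ≠ r)
    (hu : Relation.ReflTransGen (arcRel (insert (u, v) (Tc.erase e))) r u)
    (hucase : u = r ∨ u ∈ arcVerts Tc) :
    IsDirTree (insert (u, v) (Tc.erase e)) r := by
  set N := insert (u, v) (Tc.erase e) with hN
  have huvN : (u, v) ∈ N := Finset.mem_insert_self _ _
  have hrv : Relation.ReflTransGen (arcRel N) r v := hu.tail huvN
  have hTN : ∀ a ∈ Tc, a ≠ e → a ∈ N := fun a ha hne =>
    Finset.mem_insert_of_mem (Finset.mem_erase.2 ⟨hne, ha⟩)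
  have htrans : ∀ {y}, Relation.ReflTransGen (arcRel Tc) r y →
      Relation.ReflTransGen (arcRel N) r y :=
    fun {y} h => rtg_transfer' hTN (he2 ▸ hrv) h
  have huvE : (u, v) ∉ Tc.erase e := fun h => huvTc (Finset.mem_of_mem_erase h)
  have hdeg : ∀ y, inDeg N y
      = inDeg Tc y - (if v = y then 1 else 0) + (if v = y then 1 else 0) := by
    intro y
    rw [hN, inDeg_insert huvE y, inDeg_erase he y, he2]
  have hmem : ∀ y ∈ arcVerts N, y = u ∨ y = v ∨ y ∈ arcVerts Tc := by
    intro y hy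
    rcases mem_arcVerts.1 hy with ⟨a, ha, h1⟩
    rcases Finset.mem_insert.1 ha with rfl | haE
    · rcases h1 with h1 | h1
      · exact Or.inl h1.symm
      · exact Or.inr (Or.inl h1.symm)
    · exact Or.inr (Or.inr (mem_arcVerts.2 ⟨a, Finset.mem_of_mem_erase haE, h1⟩))
  have hvTc : v ∈ arcVerts Tc := he2 ▸ snd_mem_arcVerts he
  have hdegv : inDeg Tc v = 1 := hTc.2.1 v hvTc hvr
  refine ⟨?_, ?_, ?_⟩
  · rw [hdeg r, if_neg (fun h => hvr h), hTc.1]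
  · intro y hy hyr
    by_cases hyv : y = v
    · subst hyv
      rw [hdeg y, if_pos rfl, hdegv]
    · rw [hdeg y, if_neg (fun h => hyv h.symm)]
      rcases hmem y hy with h | h | h
      · subst h
        rcases hucase with h' | h'
        · exact absurd h' hyr
        · have := hTc.2.1 y h' hyr
          omega
      · exact absurd h hyv
      · have := hTc.2.1 y h hyr
        omega
  · intro y hy
    rcases hmem y hy with h | h | h
    · subst h; exact hu
    · subst h; exact hrv
    · exact htrans (hTc.2.2 y h)

/-- Swap when the new head `v` is a fresh vertex: remove the in-arc `e` of a leaf. -/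
lemma swapB {Tc : Finset (V × V)} {r u v : V} {e : V × V}
    (hTc : IsDirTree Tc r) (he : e ∈ Tc)
    (hleaf : ∀ a ∈ Tc, a.1 ≠ e.2)
    (hvTc : v ∉ arcVerts Tc)
    (huvTc : (u, v) ∉ Tc) (hvr : v ≠ r)
    (hu : Relation.ReflTransGen (arcRel (insert (u, v) (Tc.erase e))) r u)
    (hucase : u = r ∨ u ∈ arcVerts Tc)
    (huz : u ≠ e.2) :
    IsDirTree (insert (u, v) (Tc.erase e)) r := by
  set N := insert (u, v) (Tc.erase e) with hN
  have hzTc : e.2 ∈ arcVerts Tc := snd_mem_arcVerts he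
  have hzr : e.2 ≠ r := head_ne_root hTc he
  have hdegz : inDeg Tc e.2 = 1 := hTc.2.1 _ hzTc hzr
  have hvz : v ≠ e.2 := fun h => hvTc (h ▸ hzTc)
  have huvN : (u, v) ∈ N := Finset.mem_insert_self _ _
  have hrv : Relation.ReflTransGen (arcRel N) r v := hu.tail huvN
  have hTN : ∀ a ∈ Tc, a ≠ e → a ∈ N := fun a ha hne =>
    Finset.mem_insert_of_mem (Finset.mem_erase.2 ⟨hne, ha⟩)
  have huvE : (u, v) ∉ Tc.erase e := fun h => huvTc (Finset.mem_of_mem_erase h)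
  have hdeg : ∀ y, inDeg N y
      = inDeg Tc y - (if e.2 = y then 1 else 0) + (if v = y then 1 else 0) := by
    intro y
    rw [hN, inDeg_insert huvE y, inDeg_erase he y]
  have hmem : ∀ y ∈ arcVerts N, y = u ∨ y = v ∨ y ∈ arcVerts Tc := by
    intro y hy
    rcases mem_arcVerts.1 hy with ⟨a, ha, h1⟩
    rcases Finset.mem_insert.1 ha with rfl | haE
    · rcases h1 with h1 | h1
      · exact Or.inl h1.symm
      · exact Or.inr (Or.inl h1.symm)
    · exact Or.inr (Or.inr (mem_arcVerts.2 ⟨a, Finset.mem_of_mem_erase haE, h1⟩))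
  have hyz : ∀ y ∈ arcVerts N, y ≠ e.2 := by
    intro y hy hyz
    subst hyz
    rcases mem_arcVerts.1 hy with ⟨a, ha, h1 | h1⟩
    · rcases Finset.mem_insert.1 ha with rfl | haE
      · exact huz h1
      · exact hleaf a (Finset.mem_of_mem_erase haE) h1
    · rcases Finset.mem_insert.1 ha with rfl | haE
      · exact hvz h1
      · have haTc : a ∈ Tc := Finset.mem_of_mem_erase haE
        have : a = e := uniq_in hdegz haTc he h1 rfl
        exact (Finset.mem_erase.1 haE).1 this
  refine ⟨?_, ?_, ?_⟩
  · rw [hdeg r, if_neg (fun h => hzr h), if_neg (fun h => hvr h), hTc.1]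
  · intro y hy hyr
    by_cases hyv : y = v
    · subst hyv
      rw [hdeg y, if_neg (fun h => hvz h.symm), if_pos rfl, inDeg_eq_zero hvTc]
    · rw [hdeg y, if_neg (fun h => (hyz y hy) h.symm), if_neg (fun h => hyv h.symm)]
      rcases hmem y hy with h | h | h
      · subst h
        rcases hucase with h' | h'
        · exact absurd h' hyr
        · have := hTc.2.1 y h' hyr
          omega
      · exact absurd h hyv
      · have := hTc.2.1 y h hyr
        omega
  · intro y hy
    rcases hmem y hy with h | h | h
    · subst h; exact hu
    · subst h; exact hrv
    · exact rtg_transfer hTN hleaf (hTc.2.2 y h) (hyz y hy)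

/-- Prepend a single swap step to a reconfiguration sequence. -/
lemma glue {A : Finset (V × V)} {r : V} {k : ℕ} {Tc N T' : Finset (V × V)} {n : ℕ}
    (hTcA : Tc ⊆ A) (hTc : IsDirTree Tc r) (hkTc : Tc.card = k)
    (hTcN : (Tc \ N).card = 1) (hNTc : (N \ Tc).card = 1)
    (h : ∃ ℓ ≤ n, ∃ f : ℕ → Finset (V × V), f 0 = N ∧ f ℓ = T' ∧
        (∀ i ≤ ℓ, f i ⊆ A ∧ IsDirTree (f i) r ∧ (f i).card = k) ∧
        (∀ i < ℓ, (f i \ f (i + 1)).card = 1 ∧ (f (i + 1) \ f i).card = 1)) :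
    ∃ ℓ ≤ n + 1, ∃ f : ℕ → Finset (V × V), f 0 = Tc ∧ f ℓ = T' ∧
        (∀ i ≤ ℓ, f i ⊆ A ∧ IsDirTree (f i) r ∧ (f i).card = k) ∧
        (∀ i < ℓ, (f i \ f (i + 1)).card = 1 ∧ (f (i + 1) \ f i).card = 1) := by
  obtain ⟨ℓ, hℓ, f, h0, hend, hall, hstep⟩ := h
  refine ⟨ℓ + 1, by omega, fun i => if i = 0 then Tc else f (i - 1), by simp, ?_, ?_, ?_⟩
  · simp only [Nat.succ_ne_zero, if_false, Nat.add_sub_cancel]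
    exact hend
  · intro i hi
    rcases Nat.eq_zero_or_pos i with rfl | hpos
    · simpa using ⟨hTcA, hTc, hkTc⟩
    · obtain ⟨j, rfl⟩ : ∃ j, i = j + 1 := ⟨i - 1, by omega⟩
      simp only [Nat.succ_ne_zero, if_false, Nat.add_sub_cancel]
      exact hall j (by omega)
  · intro i hi
    rcases Nat.eq_zero_or_pos i with rfl | hpos
    · have e1 : (0:ℕ) + 1 ≠ 0 := Nat.succ_ne_zero 0
      simp only [if_pos rfl, if_neg e1, Nat.add_sub_cancel, h0]
      exact ⟨hTcN, hNTc⟩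
    · obtain ⟨j, rfl⟩ : ∃ j, i = j + 1 := ⟨i - 1, by omega⟩
      have e1 : j + 1 ≠ 0 := Nat.succ_ne_zero j
      have e2 : j + 1 + 1 ≠ 0 := Nat.succ_ne_zero _
      simp only [if_neg e1, if_neg e2, Nat.add_sub_cancel]
      exact hstep j (by omega)

lemma main_rec (A : Finset (V × V)) (r : V) (k : ℕ) (hk : 0 < k)
    (T' : Finset (V × V)) (hT'A : T' ⊆ A) (hT' : IsDirTree T' r) (hkT' : T'.card = k) :
    ∀ n (F Tc : Finset (V × V)), (T' \ F).card = n → F ⊆ T' → F ⊆ Tc →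
      (∀ a ∈ F, Relation.ReflTransGen (arcRel F) r a.1) →
      Tc ⊆ A → IsDirTree Tc r → Tc.card = k →
      ∃ ℓ ≤ n, ∃ f : ℕ → Finset (V × V), f 0 = Tc ∧ f ℓ = T' ∧
        (∀ i ≤ ℓ, f i ⊆ A ∧ IsDirTree (f i) r ∧ (f i).card = k) ∧
        (∀ i < ℓ, (f i \ f (i + 1)).card = 1 ∧ (f (i + 1) \ f i).card = 1) := by
  intro n
  induction n with
  | zero =>
    intro F Tc hn hFT' hFTc hFinv hTcA hTc hkTc
    have hTF : T' ⊆ F := by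
      intro x hx
      by_contra h
      have hmem : x ∈ T' \ F := Finset.mem_sdiff.2 ⟨hx, h⟩
      rw [Finset.card_eq_zero.1 hn] at hmem
      simp at hmem
    have heq : T' = Tc :=
      Finset.eq_of_subset_of_card_le (hTF.trans hFTc) (by omega)
    refine ⟨0, le_refl 0, fun _ => Tc, rfl, heq.symm, ?_, ?_⟩
    · intro i _
      exact ⟨hTcA, hTc, hkTc⟩
    · intro i hi
      omega
  | succ n IH =>
    intro F Tc hn hFT' hFTc hFinv hTcA hTc hkTc
    have hne : (T' \ F).Nonempty := Finset.card_pos.1 (by omega)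
    obtain ⟨b0, hb0⟩ := hne
    have hb0T' : b0 ∈ T' := (Finset.mem_sdiff.1 hb0).1
    have hb0F : b0 ∉ F := (Finset.mem_sdiff.1 hb0).2
    have hPb : ¬ Relation.ReflTransGen (arcRel F) r b0.2 := by
      intro hP
      rcases hP.cases_tail with h | ⟨c, _, hcb⟩
      · exact head_ne_root hT' hb0T' h
      · have hcF : (c, b0.2) ∈ F := hcb
        have hcT' : (c, b0.2) ∈ T' := hFT' hcF
        have h1 : inDeg T' b0.2 = 1 :=
          hT'.2.1 _ (snd_mem_arcVerts hb0T') (head_ne_root hT' hb0T')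
        have heq : (c, b0.2) = b0 := uniq_in h1 hcT' hb0T' rfl rfl
        rw [heq] at hcF
        exact hb0F hcF
    have hreachb : Relation.ReflTransGen (arcRel T') r b0.2 :=
      hT'.2.2 _ (snd_mem_arcVerts hb0T')
    obtain ⟨u, v, hPu, hPv, huv⟩ := crossing hreachb Relation.ReflTransGen.refl hPb
    have huvT' : (u, v) ∈ T' := huv
    have huvF : (u, v) ∉ F := fun h => hPv (hPu.tail h)
    have hvr : v ≠ r := head_ne_root hT' huvT'
    have hdT'v : inDeg T' v = 1 := hT'.2.1 v (snd_mem_arcVerts huvT') hvr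
    have hF'T' : insert (u, v) F ⊆ T' := Finset.insert_subset huvT' hFT'
    have hcardF' : (T' \ insert (u, v) F).card = n := by
      have hset : T' \ insert (u, v) F = (T' \ F).erase (u, v) := by
        ext x
        simp only [Finset.mem_sdiff, Finset.mem_erase, Finset.mem_insert, not_or]
        tauto
      rw [hset, Finset.card_erase_of_mem (Finset.mem_sdiff.2 ⟨huvT', huvF⟩), hn]
      rfl
    have hF'inv : ∀ a ∈ insert (u, v) F,
        Relation.ReflTransGen (arcRel (insert (u, v) F)) r a.1 := by
      intro a ha
      have hmono : ∀ x y, arcRel F x y → arcRel (insert (u, v) F) x y :=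
        fun x y h => Finset.mem_insert_of_mem h
      rcases Finset.mem_insert.1 ha with rfl | haF
      · exact Relation.ReflTransGen.mono hmono _ _ hPu
      · exact Relation.ReflTransGen.mono hmono _ _ (hFinv a haF)
    have hucase : u = r ∨ u ∈ arcVerts Tc := by
      rcases hPu.cases_tail with h | ⟨c, _, hcu⟩
      · exact Or.inl h
      · exact Or.inr (snd_mem_arcVerts (hFTc hcu))
    by_cases huvTc : (u, v) ∈ Tc
    · obtain ⟨ℓ, hℓ, f, hf⟩ := IH (insert (u, v) F) Tc hcardF' hF'T'
        (Finset.insert_subset huvTc hFTc) hF'inv hTcA hTc hkTc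
      exact ⟨ℓ, le_trans hℓ (Nat.le_succ n), f, hf⟩
    · by_cases hvTc : v ∈ arcVerts Tc
      · -- case A : v already a vertex of Tc; remove its in-arc
        have hdTcv : inDeg Tc v = 1 := hTc.2.1 v hvTc hvr
        obtain ⟨e, he, he2⟩ := exists_in_arc (show 0 < inDeg Tc v by omega)
        have heuv : e ≠ (u, v) := fun h => huvTc (h ▸ he)
        have heF : e ∉ F := by
          intro hF
          exact heuv (uniq_in hdT'v (hFT' hF) huvT' he2 rfl)
        have hFN : ∀ a ∈ F, a ∈ insert (u, v) (Tc.erase e) := fun a ha =>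
          Finset.mem_insert_of_mem (Finset.mem_erase.2 ⟨fun h => heF (h ▸ ha), hFTc ha⟩)
        have hu : Relation.ReflTransGen (arcRel (insert (u, v) (Tc.erase e))) r u :=
          Relation.ReflTransGen.mono (fun x y h => hFN (x, y) h) _ _ hPu
        have hN : IsDirTree (insert (u, v) (Tc.erase e)) r :=
          swapA hTc he he2 huvTc hvr hu hucase
        have hNA : insert (u, v) (Tc.erase e) ⊆ A := by
          intro x hx
          rcases Finset.mem_insert.1 hx with rfl | hxe
          · exact hT'A huvT'
          · exact hTcA (Finset.mem_of_mem_erase hxe)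
        have hkN : (insert (u, v) (Tc.erase e)).card = k := by
          have h1 : (u, v) ∉ Tc.erase e := fun h => huvTc (Finset.mem_of_mem_erase h)
          have h2 : 0 < Tc.card := Finset.card_pos.2 ⟨e, he⟩
          rw [Finset.card_insert_of_notMem h1, Finset.card_erase_of_mem he]
          omega
        have hF'N : insert (u, v) F ⊆ insert (u, v) (Tc.erase e) :=
          Finset.insert_subset (Finset.mem_insert_self _ _) (fun a ha => hFN a ha)
        have hsd1 : (Tc \ insert (u, v) (Tc.erase e)).card = 1 := by
          have hset : Tc \ insert (u, v) (Tc.erase e) = {e} := by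
            ext x
            simp only [Finset.mem_sdiff, Finset.mem_insert, Finset.mem_erase,
              Finset.mem_singleton, not_or, not_and]
            constructor
            · rintro ⟨hxTc, hx1, hx2⟩
              by_contra hne
              exact (hx2 hne) hxTc
            · rintro rfl
              exact ⟨he, heuv, fun h _ => absurd rfl h⟩
          rw [hset, Finset.card_singleton]
        have hsd2 : (insert (u, v) (Tc.erase e) \ Tc).card = 1 := by
          have hset : insert (u, v) (Tc.erase e) \ Tc = {(u, v)} := by
            ext x
            simp only [Finset.mem_sdiff, Finset.mem_insert, Finset.mem_erase,
              Finset.mem_singleton]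
            constructor
            · rintro ⟨h1 | h1, h2⟩
              · exact h1
              · exact absurd h1.2 h2
            · rintro rfl
              exact ⟨Or.inl rfl, huvTc⟩
          rw [hset, Finset.card_singleton]
        exact glue hTcA hTc hkTc hsd1 hsd2
          (IH (insert (u, v) F) (insert (u, v) (Tc.erase e)) hcardF' hF'T' hF'N hF'inv
            hNA hN hkN)
      · -- case B : v is a fresh vertex; remove the in-arc of an unfixed leaf
        have hSclosed : ∀ a : V × V, a ∈ Tc →
            a.2 ∈ insert r (F.image Prod.snd) → a.1 ∈ insert r (F.image Prod.snd) := by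
          intro a ha h2
          rcases Finset.mem_insert.1 h2 with h2r | h2i
          · exact absurd h2r (head_ne_root hTc ha)
          · obtain ⟨f0, hf0F, hf02⟩ := Finset.mem_image.1 h2i
            have hf0Tc : f0 ∈ Tc := hFTc hf0F
            have hd : inDeg Tc a.2 = 1 :=
              hTc.2.1 _ (snd_mem_arcVerts ha) (head_ne_root hTc ha)
            have haf : a = f0 := uniq_in hd ha hf0Tc rfl hf02
            rcases (hFinv f0 hf0F).cases_tail with h | ⟨c, _, hcf⟩
            · rw [haf, h]; exact Finset.mem_insert_self _ _
            · rw [haf]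
              exact Finset.mem_insert_of_mem (Finset.mem_image.2 ⟨(c, f0.1), hcf, rfl⟩)
        have hScard : (insert r (F.image Prod.snd)).card < (arcVerts Tc).card := by
          have h1 : (insert r (F.image Prod.snd)).card ≤ (F.image Prod.snd).card + 1 :=
            Finset.card_insert_le _ _
          have h1' : (F.image Prod.snd).card ≤ F.card := Finset.card_image_le
          have h2 : F.card ≤ k - 1 := by
            have hsub : F ⊆ T'.erase (u, v) := Finset.subset_erase.2 ⟨hFT', huvF⟩
            have := Finset.card_le_card hsub
            rw [Finset.card_erase_of_mem huvT', hkT'] at this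
            exact this
          have h3 : (arcVerts Tc).card = Tc.card + 1 :=
            card_arcVerts hTc (Finset.card_pos.1 (by omega))
          omega
        obtain ⟨z, hzV, hzS, hzleaf⟩ :=
          exists_leaf hTc (insert r (F.image Prod.snd)) hScard
            (Finset.mem_insert_self _ _) hSclosed
        have hzr : z ≠ r := fun h => hzS (h ▸ Finset.mem_insert_self _ _)
        have hdz : inDeg Tc z = 1 := hTc.2.1 z hzV hzr
        obtain ⟨e, he, he2⟩ := exists_in_arc (show 0 < inDeg Tc z by omega)
        have heF : e ∉ F := fun h =>
          hzS (Finset.mem_insert_of_mem (Finset.mem_image.2 ⟨e, h, he2⟩))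
        have heuv : e ≠ (u, v) := fun h => huvTc (h ▸ he)
        have huz' : u ≠ z := by
          rcases hPu.cases_tail with h | ⟨c, _, hcu⟩
          · intro hh; exact hzr (by rw [← hh, h])
          · intro hh
            apply hzS
            rw [← hh]
            exact Finset.mem_insert_of_mem (Finset.mem_image.2 ⟨(c, u), hcu, rfl⟩)
        have huz : u ≠ e.2 := by rw [he2]; exact huz'
        have hzleaf' : ∀ a ∈ Tc, a.1 ≠ e.2 := by
          intro a ha; rw [he2]; exact hzleaf a ha
        have hFN : ∀ a ∈ F, a ∈ insert (u, v) (Tc.erase e) := fun a ha =>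
          Finset.mem_insert_of_mem (Finset.mem_erase.2 ⟨fun h => heF (h ▸ ha), hFTc ha⟩)
        have hu : Relation.ReflTransGen (arcRel (insert (u, v) (Tc.erase e))) r u :=
          Relation.ReflTransGen.mono (fun x y h => hFN (x, y) h) _ _ hPu
        have hN : IsDirTree (insert (u, v) (Tc.erase e)) r :=
          swapB hTc he hzleaf' hvTc huvTc hvr hu hucase huz
        have hNA : insert (u, v) (Tc.erase e) ⊆ A := by
          intro x hx
          rcases Finset.mem_insert.1 hx with rfl | hxe
          · exact hT'A huvT'
          · exact hTcA (Finset.mem_of_mem_erase hxe)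
        have hkN : (insert (u, v) (Tc.erase e)).card = k := by
          have h1 : (u, v) ∉ Tc.erase e := fun h => huvTc (Finset.mem_of_mem_erase h)
          have h2 : 0 < Tc.card := Finset.card_pos.2 ⟨e, he⟩
          rw [Finset.card_insert_of_notMem h1, Finset.card_erase_of_mem he]
          omega
        have hF'N : insert (u, v) F ⊆ insert (u, v) (Tc.erase e) :=
          Finset.insert_subset (Finset.mem_insert_self _ _) (fun a ha => hFN a ha)
        have hsd1 : (Tc \ insert (u, v) (Tc.erase e)).card = 1 := by
          have hset : Tc \ insert (u, v) (Tc.erase e) = {e} := by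
            ext x
            simp only [Finset.mem_sdiff, Finset.mem_insert, Finset.mem_erase,
              Finset.mem_singleton, not_or, not_and]
            constructor
            · rintro ⟨hxTc, hx1, hx2⟩
              by_contra hne
              exact (hx2 hne) hxTc
            · rintro rfl
              exact ⟨he, heuv, fun h _ => absurd rfl h⟩
          rw [hset, Finset.card_singleton]
        have hsd2 : (insert (u, v) (Tc.erase e) \ Tc).card = 1 := by
          have hset : insert (u, v) (Tc.erase e) \ Tc = {(u, v)} := by
            ext x
            simp only [Finset.mem_sdiff, Finset.mem_insert, Finset.mem_erase,
              Finset.mem_singleton]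
            constructor
            · rintro ⟨h1 | h1, h2⟩
              · exact h1
              · exact absurd h1.2 h2
            · rintro rfl
              exact ⟨Or.inl rfl, huvTc⟩
          rw [hset, Finset.card_singleton]
        exact glue hTcA hTc hkTc hsd1 hsd2
          (IH (insert (u, v) F) (insert (u, v) (Tc.erase e)) hcardF' hF'T' hF'N hF'inv
            hNA hN hkN)

end DirTreeAux

/-- Any two `r`-directed trees with `k` arcs in a finite digraph are connected by a
reconfiguration sequence of `r`-directed trees with `k` arcs, of length at most `k`. -/
theorem stmt5 {V : Type*} [Fintype V] [DecidableEq V] (A : Finset (V × V)) (r : V)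
    (k : ℕ) (hk : 0 < k) (T T' : Finset (V × V))
    (hTA : T ⊆ A) (hT'A : T' ⊆ A) (hT : IsDirTree T r) (hT' : IsDirTree T' r)
    (hkT : T.card = k) (hkT' : T'.card = k) :
    ∃ ℓ ≤ k, ∃ f : ℕ → Finset (V × V), f 0 = T ∧ f ℓ = T' ∧
      (∀ i ≤ ℓ, f i ⊆ A ∧ IsDirTree (f i) r ∧ (f i).card = k) ∧
      (∀ i < ℓ, (f i \ f (i + 1)).card = 1 ∧ (f (i + 1) \ f i).card = 1) := by
  have h := DirTreeAux.main_rec A r k hk T' hT'A hT' hkT' k ∅ T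
    (by simp [hkT']) (by simp) (by simp) (by simp) hTA hT hkT
  exact h
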